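/- arXiv:quant-ph/0612033 — 2 statements merged into one kernel-verified Lean document; each statement's English description precedes it below -/
import Mathlib

section
/- Let N ≥ 1 be a natural number, set δt = 1/N, and let η ≥ 0 be a real number. Let ε : {0,…,N−1} → ℝ take values in {−1, 1}, let b₁, b₂, σ₁, σ₂ : {0,…,N−1} → ℝ, and let x₁, x₂ : {0,…,N} → ℝ satisfy the recursions xᵢ(k+1) = xᵢ(k) + bᵢ(k)·δt + σᵢ(k)·ε(k)·√δt for i = 1, 2 and all k < N. If |x₁(0) − x₂(0)| ≤ η, |b₁(k) − b₂(k)| ≤ η and |σ₁(k) − σ₂(k)| ≤ η for all k < N, then for every k ≤ N one has |x₁(k) − x₂(k)| ≤ η·(2 + √N). -/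
/-- Finitary content of the paper's Lemma: two infinitesimal random walks
`xᵢ(k+1) = xᵢ(k) + bᵢ(k)·δt + σᵢ(k)·ε(k)·√δt` (time step `δt = 1/N`) whose
drifts, diffusion coefficients and initial conditions differ by at most `η`
stay within `η·(2 + √N)` of each other on the whole time scale. -/
theorem stmt_0 (N : ℕ) (hN : 1 ≤ N) (η : ℝ) (hη : 0 ≤ η)
    (ε b₁ b₂ σ₁ σ₂ : ℕ → ℝ) (x₁ x₂ : ℕ → ℝ)
    (hε : ∀ k < N, ε k = 1 ∨ ε k = -1)
    (hx₁ : ∀ k < N,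
      x₁ (k + 1) = x₁ k + b₁ k * (1 / N) + σ₁ k * ε k * Real.sqrt (1 / N))
    (hx₂ : ∀ k < N,
      x₂ (k + 1) = x₂ k + b₂ k * (1 / N) + σ₂ k * ε k * Real.sqrt (1 / N))
    (h0 : |x₁ 0 - x₂ 0| ≤ η)
    (hb : ∀ k < N, |b₁ k - b₂ k| ≤ η)
    (hσ : ∀ k < N, |σ₁ k - σ₂ k| ≤ η) :
    ∀ k ≤ N, |x₁ k - x₂ k| ≤ η * (2 + Real.sqrt N) := by
  have hN0 : (0:ℝ) < N := by exact_mod_cast Nat.lt_of_lt_of_le Nat.zero_lt_one hN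
  have key : ∀ k ≤ N,
      |x₁ k - x₂ k| ≤ η * (1 + k * (1 / N) + k * Real.sqrt (1 / N)) := by
    intro k hk
    induction k with
    | zero => simpa using h0
    | succ k ih =>
      have hkN : k < N := hk
      have ih' := ih (le_of_lt hkN)
      have hεk : |ε k| = 1 := by rcases hε k hkN with h | h <;> simp [h]
      have hstep : x₁ (k+1) - x₂ (k+1)
          = (x₁ k - x₂ k) + (b₁ k - b₂ k) * (1 / N)
            + (σ₁ k - σ₂ k) * ε k * Real.sqrt (1 / N) := by
        rw [hx₁ k hkN, hx₂ k hkN]; ring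
      have hs : (0:ℝ) ≤ Real.sqrt (1 / N) := Real.sqrt_nonneg _
      have h1 : |(b₁ k - b₂ k) * (1 / N)| ≤ η * (1 / N) := by
        rw [abs_mul, abs_of_nonneg (by positivity : (0:ℝ) ≤ 1 / (N:ℝ))]
        exact mul_le_mul_of_nonneg_right (hb k hkN) (by positivity)
      have h2 : |(σ₁ k - σ₂ k) * ε k * Real.sqrt (1 / N)| ≤ η * Real.sqrt (1 / N) := by
        rw [abs_mul, abs_mul, hεk, mul_one,
          abs_of_nonneg hs]
        exact mul_le_mul_of_nonneg_right (hσ k hkN) hs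
      calc |x₁ (k+1) - x₂ (k+1)|
          ≤ |x₁ k - x₂ k| + |(b₁ k - b₂ k) * (1 / N)|
              + |(σ₁ k - σ₂ k) * ε k * Real.sqrt (1 / N)| := by
            rw [hstep]; exact (abs_add_le _ _).trans
              (add_le_add_left (abs_add_le _ _) _)
        _ ≤ η * (1 + k * (1 / N) + k * Real.sqrt (1 / N)) + η * (1 / N)
              + η * Real.sqrt (1 / N) := by
            exact add_le_add (add_le_add ih' h1) h2
        _ = η * (1 + (k+1 : ℕ) * (1 / N) + (k+1 : ℕ) * Real.sqrt (1 / N)) := by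
            push_cast; ring
  intro k hk
  refine (key k hk).trans ?_
  have hkN : (k:ℝ) ≤ N := by exact_mod_cast hk
  have hk0 : (0:ℝ) ≤ k := Nat.cast_nonneg k
  have hsqrt : Real.sqrt (1 / N) = (Real.sqrt N)⁻¹ := by
    rw [one_div, Real.sqrt_inv]
  have hNs : (N:ℝ) * (Real.sqrt N)⁻¹ = Real.sqrt N := by
    rw [mul_inv_eq_iff_eq_mul₀ (by positivity), Real.mul_self_sqrt hN0.le]
  have h1 : (k:ℝ) * (1 / N) ≤ 1 := by
    rw [mul_one_div, div_le_one hN0]; exact hkN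
  have h2 : (k:ℝ) * Real.sqrt (1 / N) ≤ Real.sqrt N := by
    rw [hsqrt]
    calc (k:ℝ) * (Real.sqrt N)⁻¹ ≤ N * (Real.sqrt N)⁻¹ :=
          mul_le_mul_of_nonneg_right hkN (by positivity)
      _ = Real.sqrt N := hNs
  nlinarith [hη]
end

section
/- For each n ≥ 1 let δtₙ = 1/n, let εₙ : {0,…,n−1} → {−1,1}, let b₁ₙ, b₂ₙ, σ₁ₙ, σ₂ₙ : {0,…,n−1} → ℝ, and let x₁ₙ, x₂ₙ : {0,…,n} → ℝ satisfy xᵢₙ(k+1) = xᵢₙ(k) + bᵢₙ(k)·δtₙ + σᵢₙ(k)·εₙ(k)·√δtₙ. Let η : ℕ → ℝ≥0 be such that for every n, |x₁ₙ(0) − x₂ₙ(0)| ≤ η(n), |b₁ₙ(k) − b₂ₙ(k)| ≤ η(n) and |σ₁ₙ(k) − σ₂ₙ(k)| ≤ η(n) for all k < n, and let D(n) = max_{0 ≤ k ≤ n} |x₁ₙ(k) − x₂ₙ(k)|. If the hyperreal number determined by the sequence (η(n)·√n)ₙ (i.e. its germ along the hyperfilter on ℕ) is infinitesimal, then the hyperreal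 number determined by the sequence (D(n))ₙ is infinitesimal. -/
private lemma walk_bound (n : ℕ) (hn : 1 ≤ n) (ε b₁ b₂ σ₁ σ₂ : ℕ → ℝ)
    (x₁ x₂ : ℕ → ℝ) (η : ℝ) (hη : 0 ≤ η)
    (hε : ∀ k < n, ε k = 1 ∨ ε k = -1)
    (hx₁ : ∀ k < n, x₁ (k + 1) = x₁ k + b₁ k * (1 / n) + σ₁ k * ε k * Real.sqrt (1 / n))
    (hx₂ : ∀ k < n, x₂ (k + 1) = x₂ k + b₂ k * (1 / n) + σ₂ k * ε k * Real.sqrt (1 / n))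
    (h0 : |x₁ 0 - x₂ 0| ≤ η)
    (hb : ∀ k < n, |b₁ k - b₂ k| ≤ η)
    (hσ : ∀ k < n, |σ₁ k - σ₂ k| ≤ η) :
    ∀ k ≤ n, |x₁ k - x₂ k| ≤ η * (1 + k * (1 / n) + k * Real.sqrt (1 / n)) := by
  intro k
  induction k with
  | zero => intro _; simpa using h0
  | succ k ih =>
    intro hk
    have hkn : k < n := hk
    have ihk := ih (le_of_lt hkn)
    have hεk : |ε k| = 1 := by rcases hε k hkn with h | h <;> simp [h]
    have e : x₁ (k + 1) - x₂ (k + 1) =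
        (x₁ k - x₂ k) + (b₁ k - b₂ k) * (1 / n) + (σ₁ k - σ₂ k) * ε k * Real.sqrt (1 / n) := by
      rw [hx₁ k hkn, hx₂ k hkn]; ring
    have hnpos : (0 : ℝ) < n := by exact_mod_cast hn
    have h1n : (0 : ℝ) ≤ 1 / n := by positivity
    have hs : (0 : ℝ) ≤ Real.sqrt (1 / n) := Real.sqrt_nonneg _
    calc |x₁ (k + 1) - x₂ (k + 1)|
        ≤ |x₁ k - x₂ k| + |(b₁ k - b₂ k) * (1 / n)|
            + |(σ₁ k - σ₂ k) * ε k * Real.sqrt (1 / n)| := by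
          rw [e]; exact (abs_add_le _ _).trans (by gcongr; exact abs_add_le _ _)
      _ ≤ η * (1 + k * (1 / n) + k * Real.sqrt (1 / n)) + η * (1 / n)
            + η * Real.sqrt (1 / n) := by
          gcongr
          · rw [abs_mul, abs_of_nonneg h1n]
            exact mul_le_mul_of_nonneg_right (hb k hkn) h1n
          · rw [abs_mul, abs_mul, hεk, mul_one, abs_of_nonneg hs]
            exact mul_le_mul_of_nonneg_right (hσ k hkn) hs
      _ = η * (1 + (k + 1 : ℕ) * (1 / n) + (k + 1 : ℕ) * Real.sqrt (1 / n)) := by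
          push_cast; ring

private lemma D_bound (n : ℕ) (hn : 1 ≤ n) (ε b₁ b₂ σ₁ σ₂ : ℕ → ℝ)
    (x₁ x₂ : ℕ → ℝ) (η : ℝ) (hη : 0 ≤ η)
    (hε : ∀ k < n, ε k = 1 ∨ ε k = -1)
    (hx₁ : ∀ k < n, x₁ (k + 1) = x₁ k + b₁ k * (1 / n) + σ₁ k * ε k * Real.sqrt (1 / n))
    (hx₂ : ∀ k < n, x₂ (k + 1) = x₂ k + b₂ k * (1 / n) + σ₂ k * ε k * Real.sqrt (1 / n))
    (h0 : |x₁ 0 - x₂ 0| ≤ η)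
    (hb : ∀ k < n, |b₁ k - b₂ k| ≤ η)
    (hσ : ∀ k < n, |σ₁ k - σ₂ k| ≤ η) :
    (Finset.range (n + 1)).sup' Finset.nonempty_range_add_one (fun k => |x₁ k - x₂ k|)
      ≤ 3 * (η * Real.sqrt n) := by
  have hnpos : (0 : ℝ) < n := by exact_mod_cast hn
  have h1 : (1 : ℝ) ≤ Real.sqrt n := by
    rw [show (1:ℝ) = Real.sqrt 1 by simp]
    exact Real.sqrt_le_sqrt (by exact_mod_cast hn)
  have hsq : Real.sqrt (1 / n) = 1 / Real.sqrt n := by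
    rw [one_div, one_div, Real.sqrt_inv]
  apply Finset.sup'_le
  intro k hk
  have hkn : k ≤ n := Nat.lt_succ_iff.mp (Finset.mem_range.mp hk)
  have := walk_bound n hn ε b₁ b₂ σ₁ σ₂ x₁ x₂ η hη hε hx₁ hx₂ h0 hb hσ k hkn
  refine this.trans ?_
  have hspos : (0 : ℝ) < Real.sqrt n := lt_of_lt_of_le one_pos h1
  have hk1 : (k : ℝ) * (1 / n) ≤ 1 := by
    rw [mul_one_div, div_le_one hnpos]; exact_mod_cast hkn
  have hk2 : (k : ℝ) * Real.sqrt (1 / n) ≤ Real.sqrt n := by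
    rw [hsq, mul_one_div, div_le_iff₀ hspos, Real.mul_self_sqrt hnpos.le]
    exact_mod_cast hkn
  have : 1 + (k : ℝ) * (1 / n) + k * Real.sqrt (1 / n) ≤ 3 * Real.sqrt n := by
    nlinarith
  calc η * (1 + (k:ℝ) * (1 / n) + k * Real.sqrt (1 / n)) ≤ η * (3 * Real.sqrt n) :=
        mul_le_mul_of_nonneg_left this hη
    _ = 3 * (η * Real.sqrt n) := by ring

/-- Nonstandard form of the paper's Lemma, with hyperreals realized as germs of
real sequences along the hyperfilter on ℕ: if the discrepancy `η(n)` between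
the data of two random walks on the time scale of step `1/n` is such that
`η(n)·√n` determines an infinitesimal hyperreal, then the maximal deviation
`D(n)` between the two walks also determines an infinitesimal hyperreal. -/
theorem stmt_1 (ε b₁ b₂ σ₁ σ₂ x₁ x₂ : ℕ → ℕ → ℝ) (η : ℕ → ℝ) (D : ℕ → ℝ)
    (hη : ∀ n, 0 ≤ η n)
    (hε : ∀ n, 1 ≤ n → ∀ k < n, ε n k = 1 ∨ ε n k = -1)
    (hx₁ : ∀ n, 1 ≤ n → ∀ k < n,
      x₁ n (k + 1) = x₁ n k + b₁ n k * (1 / n) + σ₁ n k * ε n k * Real.sqrt (1 / n))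
    (hx₂ : ∀ n, 1 ≤ n → ∀ k < n,
      x₂ n (k + 1) = x₂ n k + b₂ n k * (1 / n) + σ₂ n k * ε n k * Real.sqrt (1 / n))
    (h0 : ∀ n, 1 ≤ n → |x₁ n 0 - x₂ n 0| ≤ η n)
    (hb : ∀ n, 1 ≤ n → ∀ k < n, |b₁ n k - b₂ n k| ≤ η n)
    (hσ : ∀ n, 1 ≤ n → ∀ k < n, |σ₁ n k - σ₂ n k| ≤ η n)
    (hD : ∀ n, D n = (Finset.range (n + 1)).sup' Finset.nonempty_range_add_one
      (fun k => |x₁ n k - x₂ n k|))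
    (hinf : Hyperreal.Infinitesimal
      (Hyperreal.ofSeq fun n => η n * Real.sqrt n)) :
    Hyperreal.Infinitesimal (Hyperreal.ofSeq D) := by
  rw [Hyperreal.Infinitesimal, Hyperreal.isSt_ofSeq_iff_tendsto] at hinf ⊢
  have hbound : ∀ᶠ n in Filter.hyperfilter ℕ, D n ≤ 3 * (η n * Real.sqrt n) := by
    filter_upwards [(Filter.eventually_atTop.2 ⟨1, fun n hn => hn⟩).filter_mono
      Nat.hyperfilter_le_atTop] with n hn
    rw [hD n]
    exact D_bound n hn (ε n) (b₁ n) (b₂ n) (σ₁ n) (σ₂ n) (x₁ n) (x₂ n) (η n) (hη n)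
      (hε n hn) (hx₁ n hn) (hx₂ n hn) (h0 n hn) (hb n hn) (hσ n hn)
  have hDnn : ∀ n, 0 ≤ D n := by
    intro n
    rw [hD n]
    exact le_trans (abs_nonneg (x₁ n 0 - x₂ n 0)) (Finset.le_sup' (fun k => |x₁ n k - x₂ n k|) (Finset.mem_range.mpr n.succ_pos))
  have htend : Filter.Tendsto (fun n => 3 * (η n * Real.sqrt n)) (Filter.hyperfilter ℕ)
      (nhds 0) := by
    simpa using hinf.const_mul 3
  exact squeeze_zero' (Filter.Eventually.of_forall hDnn) hbound htend
end
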